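/- Suppose in addition that S admits the half-space description S = {s ∈ ℝⁿ : g_h·s ≤ ξ_h for h = 1,…,H} with all ξ_h > 0, and for each vertex vᵢ of S let Cᵢ = {s ∈ ℝⁿ : g_h·s ≤ ξ_h for every h with g_h·vᵢ = ξ_h}. Then S is positively D-invariant for the system ṡ(t) = F(q(t)) s(t) + E(q(t)) δ(t) if and only if for every τ > 0, every vertex vᵢ ∈ {v₁,…,v_μ} of S, every vertex w_j ∈ {w₁,…,w_ν} of Q, and every vertex r_k ∈ {r₁,…,r_η} of D, one has vᵢ + τ·(F(w_j) vᵢ + E(w_j) r_k) ∈ Cᵢ. -/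

import Mathlib

open Set Matrix Topology Filter

/-- The affine matrix function `F(q) = F₀ + ∑ l, q_l F_l`. -/
noncomputable def matF {n p : ℕ} (F0 : Matrix (Fin n) (Fin n) ℝ)
    (F : Fin p → Matrix (Fin n) (Fin n) ℝ) (q : Fin p → ℝ) : Matrix (Fin n) (Fin n) ℝ :=
  F0 + ∑ l, q l • F l

/-- The affine matrix function `E(q) = E₀ + ∑ l, q_l E_l`. -/
noncomputable def matE {n l p : ℕ} (E0 : Matrix (Fin n) (Fin l) ℝ)
    (E : Fin p → Matrix (Fin n) (Fin l) ℝ) (q : Fin p → ℝ) : Matrix (Fin n) (Fin l) ℝ :=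
  E0 + ∑ i, q i • E i

/-- `S` is positively `D`-invariant for the system `ṡ(t) = F(q(t)) s(t) + E(q(t)) δ(t)`. -/
def PosDInvariant {n l p : ℕ} (F0 : Matrix (Fin n) (Fin n) ℝ)
    (F : Fin p → Matrix (Fin n) (Fin n) ℝ)
    (E0 : Matrix (Fin n) (Fin l) ℝ) (E : Fin p → Matrix (Fin n) (Fin l) ℝ)
    (S : Set (Fin n → ℝ)) (Q : Set (Fin p → ℝ)) (D : Set (Fin l → ℝ)) : Prop :=
  ∀ q : ℝ → Fin p → ℝ, ContinuousOn q (Ici 0) → (∀ t ∈ Ici (0 : ℝ), q t ∈ Q) →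
  ∀ δ : ℝ → Fin l → ℝ, ContinuousOn δ (Ici 0) → (∀ t ∈ Ici (0 : ℝ), δ t ∈ D) →
  ∀ s : ℝ → Fin n → ℝ,
    (∀ t ∈ Ici (0 : ℝ),
      HasDerivAt s ((matF F0 F (q t)).mulVec (s t) + (matE E0 E (q t)).mulVec (δ t)) t) →
    s 0 ∈ S → ∀ t ∈ Ici (0 : ℝ), s t ∈ S

namespace PDIAux

open NormedSpace

lemma exists_solution {n : ℕ} (A : Matrix (Fin n) (Fin n) ℝ) (b x0 : Fin n → ℝ) :
    ∃ s : ℝ → Fin n → ℝ, s 0 = x0 ∧ ∀ t, HasDerivAt s (A.mulVec (s t) + b) t := by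
  set Tl : ((Fin n → ℝ) × ℝ) →ₗ[ℝ] ((Fin n → ℝ) × ℝ) :=
    { toFun := fun z => (A.mulVec z.1 + z.2 • b, 0)
      map_add' := by intro z w; ext i <;> simp [Matrix.mulVec_add, add_smul]; ring
      map_smul' := by intro c z; ext i <;> simp [Matrix.mulVec_smul, smul_smul] }
  set T := Tl.toContinuousLinearMap with hT
  set z : ℝ → (Fin n → ℝ) × ℝ := fun t => (NormedSpace.exp (t • T)) (x0, 1) with hzdef
  have hz : ∀ t, HasDerivAt z (T (z t)) t := by
    intro t
    have h := hasDerivAt_exp_smul_const' (𝕂 := ℝ) T t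
    have h2 := (ContinuousLinearMap.apply ℝ _
      ((x0, 1) : (Fin n → ℝ) × ℝ)).hasFDerivAt.comp_hasDerivAt t h
    simpa [Function.comp_def] using h2
  have hz0 : z 0 = (x0, 1) := by simp [hzdef]
  have hu : ∀ t, (z t).2 = 1 := by
    intro t
    have hdiff : Differentiable ℝ (fun t => (z t).2) := fun t =>
      (((ContinuousLinearMap.snd ℝ (Fin n → ℝ) ℝ).hasFDerivAt.comp_hasDerivAt t
        (hz t))).differentiableAt
    have hderiv : ∀ t, deriv (fun t => (z t).2) t = 0 := by
      intro t
      have hd := ((ContinuousLinearMap.snd ℝ (Fin n → ℝ) ℝ).hasFDerivAt.comp_hasDerivAt t (hz t))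
      have h0 : (T (z t)).2 = 0 := rfl
      have := hd.deriv
      simpa [h0, Function.comp_def] using this
    have := is_const_of_deriv_eq_zero hdiff hderiv t 0
    simpa [hz0] using this
  refine ⟨fun t => (z t).1, by simp [hz0], ?_⟩
  intro t
  have h1 := (ContinuousLinearMap.fst ℝ (Fin n → ℝ) ℝ).hasFDerivAt.comp_hasDerivAt t (hz t)
  have h2 : (T (z t)).1 = A.mulVec ((z t).1) + b := by
    show A.mulVec ((z t).1) + (z t).2 • b = _
    rw [hu t, one_smul]
  simpa [h2, Function.comp_def] using h1

lemma hasDerivAt_dot {n : ℕ} (gv : Fin n → ℝ) {s : ℝ → Fin n → ℝ} {d : Fin n → ℝ} {t : ℝ}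
    (h : HasDerivAt s d t) : HasDerivAt (fun x => gv ⬝ᵥ s x) (gv ⬝ᵥ d) t := by
  simp only [dotProduct]
  exact HasDerivAt.fun_sum fun i _ => ((hasDerivAt_pi.1 h) i).const_mul (gv i)

lemma deriv_nonpos_of_le_left {φ : ℝ → ℝ} {d : ℝ} (h : HasDerivAt φ d 0)
    (hle : ∀ t ≥ (0:ℝ), φ t ≤ φ 0) : d ≤ 0 := by
  have h' := (h.hasDerivWithinAt (s := Ioi 0))
  rw [hasDerivWithinAt_iff_tendsto_slope] at h'
  have hIoi : Ioi (0:ℝ) \ {0} = Ioi 0 := by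
    rw [Set.diff_singleton_eq_self]; exact notMem_Ioi.2 le_rfl
  rw [hIoi] at h'
  refine le_of_tendsto h' ?_
  filter_upwards [self_mem_nhdsWithin] with z hz
  have hz' : (0:ℝ) < z := hz
  rw [slope_def_field]
  have h1 : φ z - φ 0 ≤ 0 := sub_nonpos.2 (hle z hz'.le)
  have := div_nonpos_of_nonpos_of_nonneg h1 hz'.le
  simpa [div_eq_inv_mul] using this

lemma affine_comb {p : ℕ} {α : Type*} [AddCommGroup α] [Module ℝ α] (M0 : α) (M : Fin p → α)
    (a b : ℝ) (x y : Fin p → ℝ) (hab : a + b = 1) :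
    (M0 + ∑ l, (a • x + b • y) l • M l)
      = a • (M0 + ∑ l, x l • M l) + b • (M0 + ∑ l, y l • M l) := by
  simp only [Pi.add_apply, Pi.smul_apply, smul_eq_mul, add_smul, Finset.sum_add_distrib,
    smul_add, Finset.smul_sum, smul_smul]
  have : a • M0 + b • M0 = M0 := by rw [← add_smul, hab, one_smul]
  rw [add_add_add_comm, this]

lemma matF_comb {n p : ℕ} (F0 : Matrix (Fin n) (Fin n) ℝ) (F : Fin p → Matrix (Fin n) (Fin n) ℝ)
    {a b : ℝ} (x y : Fin p → ℝ) (hab : a + b = 1) :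
    matF F0 F (a • x + b • y) = a • matF F0 F x + b • matF F0 F y :=
  affine_comb F0 F a b x y hab

lemma matE_comb {n l p : ℕ} (E0 : Matrix (Fin n) (Fin l) ℝ) (E : Fin p → Matrix (Fin n) (Fin l) ℝ)
    {a b : ℝ} (x y : Fin p → ℝ) (hab : a + b = 1) :
    matE E0 E (a • x + b • y) = a • matE E0 E x + b • matE E0 E y :=
  affine_comb E0 E a b x y hab

lemma nonpos_on_hull {d : ℕ} {A : (Fin d → ℝ) → ℝ}
    (hA : ∀ (a b : ℝ), a + b = 1 → ∀ x y, A (a • x + b • y) = a * A x + b * A y)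
    {σ : Set (Fin d → ℝ)} (hu : ∀ u ∈ σ, A u ≤ 0) :
    ∀ x ∈ convexHull ℝ σ, A x ≤ 0 := by
  have hsub : convexHull ℝ σ ⊆ {x | A x ≤ 0} := by
    apply convexHull_min hu
    intro x hx y hy a b ha hb hab
    show A _ ≤ 0
    rw [hA a b hab x y]
    exact add_nonpos (mul_nonpos_of_nonneg_of_nonpos ha hx) (mul_nonpos_of_nonneg_of_nonpos hb hy)
  exact fun x hx => hsub hx

lemma eq_of_avg {ι : Type*} (t : Finset ι) (wt : ι → ℝ) (a : ι → ℝ) (A : ℝ)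
    (hw : ∀ i ∈ t, 0 ≤ wt i) (hsum : ∑ i ∈ t, wt i = 1) (hle : ∀ i ∈ t, a i ≤ A)
    (heq : ∑ i ∈ t, wt i * a i = A) : ∀ i ∈ t, wt i ≠ 0 → a i = A := by
  have h0 : ∑ i ∈ t, wt i * (A - a i) = 0 := by
    simp only [mul_sub]
    rw [Finset.sum_sub_distrib, ← Finset.sum_mul, hsum, one_mul, heq, sub_self]
  have hall := (Finset.sum_eq_zero_iff_of_nonneg
    (fun i hi => mul_nonneg (hw i hi) (sub_nonneg.2 (hle i hi)))).1 h0
  intro i hi hne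
  rcases mul_eq_zero.1 (hall i hi) with h | h
  · exact absurd h hne
  · linarith [sub_eq_zero.1 h]

lemma vertex_ext {n l p ν η : ℕ} (F0 : Matrix (Fin n) (Fin n) ℝ)
    (F : Fin p → Matrix (Fin n) (Fin n) ℝ)
    (E0 : Matrix (Fin n) (Fin l) ℝ) (E : Fin p → Matrix (Fin n) (Fin l) ℝ)
    (u gh : Fin n → ℝ) (w : Fin ν → Fin p → ℝ) (r : Fin η → Fin l → ℝ)
    (hvert : ∀ j k, gh ⬝ᵥ ((matF F0 F (w j)).mulVec u + (matE E0 E (w j)).mulVec (r k)) ≤ 0) :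
    ∀ q ∈ convexHull ℝ (Set.range w), ∀ δ ∈ convexHull ℝ (Set.range r),
      gh ⬝ᵥ ((matF F0 F q).mulVec u + (matE E0 E q).mulVec δ) ≤ 0 := by
  intro q hq δ hδ
  have step1 : ∀ k, gh ⬝ᵥ ((matF F0 F q).mulVec u + (matE E0 E q).mulVec (r k)) ≤ 0 := by
    intro k
    refine nonpos_on_hull
      (A := fun q => gh ⬝ᵥ ((matF F0 F q).mulVec u + (matE E0 E q).mulVec (r k))) ?_ ?_ q hq
    · intro a b hab x y
      rw [matF_comb F0 F x y hab, matE_comb E0 E x y hab]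
      simp only [Matrix.add_mulVec, Matrix.smul_mulVec, dotProduct_add, dotProduct_smul,
        smul_eq_mul]
      ring
    · rintro _ ⟨j, rfl⟩; exact hvert j k
  refine nonpos_on_hull
    (A := fun δ => gh ⬝ᵥ ((matF F0 F q).mulVec u + (matE E0 E q).mulVec δ)) ?_ ?_ δ hδ
  · intro a b hab x y
    rw [Matrix.mulVec_add, Matrix.mulVec_smul, Matrix.mulVec_smul]
    simp only [dotProduct_add, dotProduct_smul, smul_eq_mul]
    linear_combination (-(gh ⬝ᵥ (matF F0 F q).mulVec u)) * hab
  · rintro _ ⟨k, rfl⟩; exact step1 k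

lemma key_ineq {n : ℕ} {σ : Set (Fin n → ℝ)} (gh : Fin n → ℝ) (ξh : ℝ) (hξh : 0 < ξh)
    (Mmat : Matrix (Fin n) (Fin n) ℝ) (evec : Fin n → ℝ)
    (hvert : ∀ z ∈ σ, gh ⬝ᵥ z = ξh → gh ⬝ᵥ (Mmat.mulVec z + evec) ≤ 0)
    (hsub : ∀ z ∈ σ, gh ⬝ᵥ z ≤ ξh)
    (x : Fin n → ℝ) (c : ℝ) (hc : 1 ≤ c)
    (hmem : c⁻¹ • x ∈ convexHull ℝ σ)
    (hact : gh ⬝ᵥ x = c * ξh) :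
    gh ⬝ᵥ (Mmat.mulVec x + evec) ≤ (c - 1) * |gh ⬝ᵥ evec| := by
  have hc0 : (0:ℝ) < c := lt_of_lt_of_le one_pos hc
  set y := c⁻¹ • x with hy
  set Λ : (Fin n → ℝ) →ₗ[ℝ] ℝ :=
    { toFun := fun z => gh ⬝ᵥ z
      map_add' := fun a b => dotProduct_add gh a b
      map_smul' := fun m a => by simp [dotProduct_smul] } with hΛ
  have hΛapp : ∀ z, Λ z = gh ⬝ᵥ z := fun _ => rfl
  rw [convexHull_eq] at hmem
  obtain ⟨ι, t, wt, zf, hw0, hw1, hzmem, hcm⟩ := hmem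
  have hcomb : ∑ i ∈ t, wt i • zf i = y := by
    rw [← Finset.centerMass_eq_of_sum_1 _ _ hw1]; exact hcm
  have hyξ : gh ⬝ᵥ y = ξh := by
    rw [hy, dotProduct_smul, hact, smul_eq_mul]; field_simp
  have havg : ∑ i ∈ t, wt i * (gh ⬝ᵥ zf i) = ξh := by
    rw [← hyξ, ← hcomb, ← hΛapp, map_sum]
    simp [hΛapp, dotProduct_smul]
  have hactz := eq_of_avg t wt (fun i => gh ⬝ᵥ zf i) ξh hw0 hw1
    (fun i hi => hsub _ (hzmem i hi)) havg
  have hMy : gh ⬝ᵥ Mmat.mulVec y = ∑ i ∈ t, wt i * (gh ⬝ᵥ Mmat.mulVec (zf i)) := by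
    rw [← hcomb, ← Matrix.mulVecLin_apply, map_sum, ← hΛapp, map_sum]
    simp [hΛapp, dotProduct_smul, Matrix.mulVecLin_apply, Matrix.mulVec_smul]
  have hbound : gh ⬝ᵥ Mmat.mulVec y ≤ -(gh ⬝ᵥ evec) := by
    rw [hMy]
    calc ∑ i ∈ t, wt i * (gh ⬝ᵥ Mmat.mulVec (zf i))
        ≤ ∑ i ∈ t, wt i * (-(gh ⬝ᵥ evec)) := by
          apply Finset.sum_le_sum
          intro i hi
          rcases eq_or_ne (wt i) 0 with h0 | h0
          · simp [h0]
          · have hz := hvert _ (hzmem i hi) (hactz i hi h0)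
            rw [dotProduct_add] at hz
            exact mul_le_mul_of_nonneg_left (by linarith) (hw0 i hi)
      _ = -(gh ⬝ᵥ evec) := by rw [← Finset.sum_mul, hw1, one_mul]
  have hxy : x = c • y := by rw [hy, smul_inv_smul₀ (ne_of_gt hc0)]
  have hMx : gh ⬝ᵥ Mmat.mulVec x = c * (gh ⬝ᵥ Mmat.mulVec y) := by
    rw [hxy, Matrix.mulVec_smul, dotProduct_smul, smul_eq_mul]
  rw [dotProduct_add, hMx]
  have h1 : c * (gh ⬝ᵥ Mmat.mulVec y) ≤ c * (-(gh ⬝ᵥ evec)) :=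
    mul_le_mul_of_nonneg_left hbound hc0.le
  have h2 : -(gh ⬝ᵥ evec) ≤ |gh ⬝ᵥ evec| := neg_le_abs _
  nlinarith [abs_nonneg (gh ⬝ᵥ evec)]

lemma cont_Eterm {n l p : ℕ} (E0 : Matrix (Fin n) (Fin l) ℝ)
    (E : Fin p → Matrix (Fin n) (Fin l) ℝ) (gj : Fin n → ℝ) :
    Continuous (fun ad : (Fin p → ℝ) × (Fin l → ℝ) => gj ⬝ᵥ (matE E0 E ad.1).mulVec ad.2) := by
  simp only [matE, dotProduct, Matrix.mulVec, Matrix.add_apply, Matrix.sum_apply,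
    Matrix.smul_apply, smul_eq_mul]
  apply continuous_finset_sum
  intro i _
  apply Continuous.mul continuous_const
  apply continuous_finset_sum
  intro c _
  apply Continuous.mul
  · apply Continuous.add continuous_const
    apply continuous_finset_sum
    intro u _
    exact ((continuous_apply u).comp continuous_fst).mul continuous_const
  · exact (continuous_apply c).comp continuous_snd

lemma contOn_dot {n : ℕ} (gh : Fin n → ℝ) {s : ℝ → Fin n → ℝ} {U : Set ℝ}
    (hs : ContinuousOn s U) : ContinuousOn (fun x => gh ⬝ᵥ s x) U := by
  simp only [dotProduct]
  apply continuousOn_finset_sum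
  intro i _
  exact continuousOn_const.mul ((continuous_apply i).comp_continuousOn hs)

end PDIAux

open PDIAux in
/-- Theorem 4: given a half-space description of `S`, positive `D`-invariance is equivalent
to the Euler step from every vertex landing, for every `τ > 0`, in the cone `Cᵢ` defined by
the delimiting planes of `S` active at that vertex. -/
theorem posDInvariant_iff_euler_step_cone {n l p μ ν η H : ℕ}
    (F0 : Matrix (Fin n) (Fin n) ℝ) (F : Fin p → Matrix (Fin n) (Fin n) ℝ)
    (E0 : Matrix (Fin n) (Fin l) ℝ) (E : Fin p → Matrix (Fin n) (Fin l) ℝ)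
    (v : Fin μ → Fin n → ℝ) (w : Fin ν → Fin p → ℝ) (r : Fin η → Fin l → ℝ)
    (S : Set (Fin n → ℝ)) (Q : Set (Fin p → ℝ)) (D : Set (Fin l → ℝ))
    (g : Fin H → Fin n → ℝ) (ξ : Fin H → ℝ) (hξ : ∀ h, 0 < ξ h)
    (hS : S = convexHull ℝ (Set.range v))
    (hS' : S = {s : Fin n → ℝ | ∀ h, g h ⬝ᵥ s ≤ ξ h})
    (hQ : Q = convexHull ℝ (Set.range w))
    (hD : D = convexHull ℝ (Set.range r))
    (hSint : (interior S).Nonempty) (hS0 : (0 : Fin n → ℝ) ∈ S) :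
    PosDInvariant F0 F E0 E S Q D ↔
      ∀ τ : ℝ, 0 < τ → ∀ (i : Fin μ) (j : Fin ν) (k : Fin η),
        v i + τ • ((matF F0 F (w j)).mulVec (v i) + (matE E0 E (w j)).mulVec (r k))
          ∈ {s : Fin n → ℝ | ∀ h, g h ⬝ᵥ v i = ξ h → g h ⬝ᵥ s ≤ ξ h} := by
  constructor
  · -- invariance → vertex condition
    intro hInv τ hτ i j k
    intro h hact
    set A := matF F0 F (w j) with hA
    set bb := (matE E0 E (w j)).mulVec (r k) with hbb
    obtain ⟨s, hs0, hsd⟩ := exists_solution A bb (v i)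
    have hmem : ∀ t ∈ Ici (0:ℝ), s t ∈ S := by
      apply hInv (fun _ => w j) continuousOn_const
        (fun _ _ => by rw [hQ]; exact subset_convexHull ℝ _ (mem_range_self j))
        (fun _ => r k) continuousOn_const
        (fun _ _ => by rw [hD]; exact subset_convexHull ℝ _ (mem_range_self k))
        s (fun t _ => hsd t)
      rw [hs0, hS]; exact subset_convexHull ℝ _ (mem_range_self i)
    have hφd : HasDerivAt (fun t => g h ⬝ᵥ s t) (g h ⬝ᵥ (A.mulVec (s 0) + bb)) 0 :=
      hasDerivAt_dot (g h) (hsd 0)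
    have hle : ∀ t ≥ (0:ℝ), g h ⬝ᵥ s t ≤ g h ⬝ᵥ s 0 := by
      intro t htt
      have h1 : s t ∈ S := hmem t htt
      rw [hS'] at h1
      have h2 := h1 h
      rw [hs0, hact]
      exact h2
    have hd : g h ⬝ᵥ (A.mulVec (s 0) + bb) ≤ 0 := deriv_nonpos_of_le_left hφd hle
    rw [hs0] at hd
    show g h ⬝ᵥ (v i + τ • (A.mulVec (v i) + bb)) ≤ ξ h
    rw [dotProduct_add, dotProduct_smul, smul_eq_mul, hact]
    nlinarith
  · -- vertex condition → invariance
    intro hEuler q hqc hqQ δ hδc hδD s hsd hs0 t ht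
    rcases Nat.eq_zero_or_pos H with hH | hH
    · rw [hS']; intro hh; exact absurd hh.2 (by omega)
    haveI hne : Nonempty (Fin H) := ⟨⟨0, hH⟩⟩
    set dv : ℝ → Fin n → ℝ :=
      fun x => (matF F0 F (q x)).mulVec (s x) + (matE E0 E (q x)).mulVec (δ x) with hdv
    set ψ : Fin H → ℝ → ℝ := fun h x => (g h ⬝ᵥ s x) / ξ h with hψ
    set V : ℝ → ℝ := fun x => Finset.univ.sup' Finset.univ_nonempty (fun h => ψ h x) with hVdef
    have hψle : ∀ h x, ψ h x ≤ V x := fun h x => Finset.le_sup' (fun h => ψ h x) (Finset.mem_univ h)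
    have hψd : ∀ (h : Fin H), ∀ x ∈ Ici (0:ℝ), HasDerivAt (ψ h) ((g h ⬝ᵥ dv x) / ξ h) x :=
      fun h x hx => (hasDerivAt_dot (g h) (hsd x hx)).div_const (ξ h)
    have hscont : ContinuousOn s (Ici 0) :=
      fun x hx => ((hsd x hx).continuousAt).continuousWithinAt
    have hψcont : ∀ h : Fin H, ContinuousOn (ψ h) (Ici 0) :=
      fun h => (contOn_dot (g h) hscont).div_const (ξ h)
    have hVcont : ContinuousOn V (Ici 0) :=
      ContinuousOn.finset_sup'_apply Finset.univ_nonempty (fun h _ => hψcont h)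
    have ht0' : (0:ℝ) ≤ t := ht
    by_contra hcon
    have hVt : 1 < V t := by
      rw [hS'] at hcon
      simp only [mem_setOf_eq, not_forall, not_le] at hcon
      obtain ⟨h, hlt⟩ := hcon
      exact lt_of_lt_of_le ((one_lt_div (hξ h)).2 hlt) (hψle h t)
    have hV0 : V 0 ≤ 1 := by
      apply Finset.sup'_le
      intro h _
      rw [hS'] at hs0
      exact (div_le_one (hξ h)).2 (hs0 h)
    -- bound on the disturbance term
    have hMex : ∀ h : Fin H, ∃ C, ∀ x ∈ Icc (0:ℝ) t,
        ‖g h ⬝ᵥ (matE E0 E (q x)).mulVec (δ x)‖ ≤ C := by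
      intro h
      have hcEt : ContinuousOn (fun x => g h ⬝ᵥ (matE E0 E (q x)).mulVec (δ x)) (Icc (0:ℝ) t) := by
        have hcomp := (cont_Eterm E0 E (g h)).comp_continuousOn
          ((hqc.mono (Icc_subset_Ici_self : Icc (0:ℝ) t ⊆ Ici 0)).prodMk
            (hδc.mono Icc_subset_Ici_self))
        simpa [Function.comp_def] using hcomp
      exact isCompact_Icc.exists_bound_of_continuousOn hcEt
    choose C hC using hMex
    set M : ℝ := (Finset.univ.sup' Finset.univ_nonempty C) ⊔ 0 with hMdef
    have hM0 : 0 ≤ M := le_sup_right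
    have hM : ∀ x ∈ Icc (0:ℝ) t, ∀ h : Fin H,
        |g h ⬝ᵥ (matE E0 E (q x)).mulVec (δ x)| ≤ M := by
      intro x hx h
      refine le_trans (hC h x hx) (le_trans (Finset.le_sup' _ (Finset.mem_univ h)) le_sup_left)
    set ξmin : ℝ := Finset.univ.inf' Finset.univ_nonempty ξ with hξmindef
    have hξmin : 0 < ξmin := by
      rw [hξmindef, Finset.lt_inf'_iff]
      exact fun h _ => hξ h
    have hξminle : ∀ h : Fin H, ξmin ≤ ξ h := fun h => Finset.inf'_le _ (Finset.mem_univ h)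
    set K : ℝ := M / ξmin with hKdef
    have hK0 : 0 ≤ K := div_nonneg hM0 hξmin.le
    -- first crossing time
    set G := {x ∈ Icc (0:ℝ) t | V x ≤ 1} with hGdef
    have hG0 : (0:ℝ) ∈ G := ⟨⟨le_rfl, ht0'⟩, hV0⟩
    have hGclosed : IsClosed G :=
      (hVcont.mono Icc_subset_Ici_self).preimage_isClosed_of_isClosed isClosed_Icc isClosed_Iic
    have hGcomp : IsCompact G := isCompact_Icc.of_isClosed_subset hGclosed (sep_subset _ _)
    set t0 := sSup G with ht0def
    have ht0G : t0 ∈ G := hGcomp.sSup_mem ⟨0, hG0⟩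
    have ht0mem : t0 ∈ Icc (0:ℝ) t := ht0G.1
    have hVt0le : V t0 ≤ 1 := ht0G.2
    have ht0t : t0 < t := by
      rcases lt_or_eq_of_le ht0mem.2 with h | h
      · exact h
      · rw [h] at hVt0le; linarith
    have hGbdd : BddAbove G := ⟨t, fun y hy => hy.1.2⟩
    have hgt : ∀ x ∈ Ioc t0 t, 1 < V x := by
      intro x hx
      by_contra hle
      push_neg at hle
      have hxG : x ∈ G := ⟨⟨le_trans ht0mem.1 hx.1.le, hx.2⟩, hle⟩
      have : x ≤ t0 := le_csSup hGbdd hxG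
      linarith [hx.1]
    have hVt0 : V t0 = 1 := by
      refine le_antisymm hVt0le ?_
      by_contra hlt
      push_neg at hlt
      have hcw : ContinuousWithinAt V (Ici 0) t0 := hVcont t0 ht0mem.1
      have hev : ∀ᶠ x in 𝓝[Ici 0] t0, V x < 1 := hcw.eventually_lt_const hlt
      have hsub : 𝓝[>] t0 ≤ 𝓝[Ici (0:ℝ)] t0 :=
        nhdsWithin_mono t0 (fun z hz => le_trans ht0mem.1 (le_of_lt hz))
      have hIoc : ∀ᶠ x in 𝓝[>] t0, x ∈ Ioc t0 t :=
        Filter.eventually_of_mem (Ioc_mem_nhdsGT_of_mem ⟨le_rfl, ht0t⟩) (fun x hx => hx)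
      have hev' : ∀ᶠ x in 𝓝[>] t0, V x < 1 := hev.filter_mono hsub
      obtain ⟨x, hx1, hx2⟩ := (hev'.and hIoc).exists
      exact absurd (hgt x hx2) (not_lt.2 hx1.le)
    -- the Dini derivative bound
    set act : ℝ → Finset (Fin H) :=
      fun x => Finset.univ.filter (fun h => ψ h x = V x) with hactdef
    have hact_ne : ∀ x, (act x).Nonempty := by
      intro x
      obtain ⟨h, _, hh⟩ := Finset.exists_mem_eq_sup' (Finset.univ_nonempty) (fun h => ψ h x)
      exact ⟨h, Finset.mem_filter.2 ⟨Finset.mem_univ h, hh.symm⟩⟩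
    set f' : ℝ → ℝ := fun x => (act x).sup' (hact_ne x) (fun h => (g h ⬝ᵥ dv x) / ξ h) with hf'def
    have hIccsub : Icc t0 t ⊆ Ici (0:ℝ) := fun x hx => le_trans ht0mem.1 hx.1
    have hgron := le_gronwallBound_of_liminf_deriv_right_le (f := V) (f' := f')
      (a := t0) (b := t) (δ := 1) (K := K) (ε := -K) (hVcont.mono hIccsub)
      ?_ (le_of_eq hVt0) ?_ t ⟨ht0t.le, le_rfl⟩
    · have hgb : gronwallBound 1 K (-K) (t - t0) = 1 := by
        rcases eq_or_ne K 0 with h | h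
        · rw [h, gronwallBound_K0]; simp
        · rw [gronwallBound_of_K_ne_0 h]; field_simp; ring
      rw [hgb] at hgron
      linarith
    · -- liminf slope condition
      intro x hx rr hrr
      have hx0 : x ∈ Ici (0:ℝ) := le_trans ht0mem.1 hx.1
      have hev : ∀ᶠ z in 𝓝[>] x, ∀ h : Fin H, ψ h z < V x + rr * (z - x) := by
        rw [eventually_all]
        intro h
        by_cases hh : h ∈ act x
        · have hd := hψd h x hx0
          have hlt : (g h ⬝ᵥ dv x) / ξ h < rr :=
            lt_of_le_of_lt (Finset.le_sup' (fun h => (g h ⬝ᵥ dv x) / ξ h) hh) hrr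
          have hslope : ∀ᶠ z in 𝓝[≠] x, slope (ψ h) x z < rr :=
            (hasDerivAt_iff_tendsto_slope.1 hd).eventually_lt_const hlt
          have hsub2 : 𝓝[>] x ≤ 𝓝[≠] x :=
            nhdsWithin_mono x (fun z hz => ne_of_gt hz)
          have hψx : ψ h x = V x := (Finset.mem_filter.1 hh).2
          filter_upwards [hsub2 hslope, self_mem_nhdsWithin] with z hz hzx
          rw [slope_def_field] at hz
          have hzx' : (0:ℝ) < z - x := sub_pos.2 hzx
          have h5 : ψ h z - ψ h x < rr * (z - x) := (div_lt_iff₀ hzx').1 hz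
          linarith [hψx]
        · have hψlt : ψ h x < V x :=
            lt_of_le_of_ne (hψle h x)
              (fun he => hh (Finset.mem_filter.2 ⟨Finset.mem_univ h, he⟩))
          have hcont : ContinuousAt (ψ h) x := (hψd h x hx0).continuousAt
          have h1 : ∀ᶠ z in 𝓝 x, ψ h z < (ψ h x + V x) / 2 :=
            hcont.eventually_lt_const (by linarith)
          have h2 : Filter.Tendsto (fun z => V x + rr * (z - x)) (𝓝 x) (𝓝 (V x)) := by
            have : Filter.Tendsto (fun z : ℝ => rr * (z - x)) (𝓝 x) (𝓝 0) := by
              have hcc : Continuous (fun z : ℝ => rr * (z - x)) :=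
                continuous_const.mul (continuous_id.sub continuous_const)
              have := hcc.tendsto x
              simpa using this
            simpa using tendsto_const_nhds.add this
          have h3 : ∀ᶠ z in 𝓝 x, (ψ h x + V x) / 2 < V x + rr * (z - x) :=
            h2.eventually_const_lt (by linarith)
          exact Filter.Eventually.filter_mono nhdsWithin_le_nhds
            ((h1.and h3).mono fun z hz => lt_trans hz.1 hz.2)
      have hev2 : ∀ᶠ z in 𝓝[>] x, (z - x)⁻¹ * (V z - V x) < rr := by
        filter_upwards [hev, self_mem_nhdsWithin] with z hz hzx
        have hzx' : (0:ℝ) < z - x := sub_pos.2 hzx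
        have hVz : V z < V x + rr * (z - x) := by
          show Finset.univ.sup' Finset.univ_nonempty (fun h => ψ h z) < V x + rr * (z - x)
          exact (Finset.sup'_lt_iff Finset.univ_nonempty).2 (fun h _ => hz h)
        rw [inv_mul_eq_div]
        exact (div_lt_iff₀ hzx').2 (by nlinarith)
      exact hev2.frequently
    · -- the differential inequality
      intro x hx
      have hx0 : x ∈ Ici (0:ℝ) := le_trans ht0mem.1 hx.1
      have hc1 : 1 ≤ V x := by
        rcases eq_or_lt_of_le hx.1 with he | hlt
        · rw [← he, hVt0]
        · exact (hgt x ⟨hlt, hx.2.le⟩).le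
      apply Finset.sup'_le
      intro h hh
      have hψx : ψ h x = V x := (Finset.mem_filter.1 hh).2
      have hsubv : ∀ z ∈ Set.range v, g h ⬝ᵥ z ≤ ξ h := by
        intro z hz
        have hzS : z ∈ S := by rw [hS]; exact subset_convexHull ℝ _ hz
        rw [hS'] at hzS
        exact hzS h
      have hvert : ∀ z ∈ Set.range v, g h ⬝ᵥ z = ξ h →
          g h ⬝ᵥ ((matF F0 F (q x)).mulVec z + (matE E0 E (q x)).mulVec (δ x)) ≤ 0 := by
        rintro z ⟨i, rfl⟩ hzact
        refine vertex_ext F0 F E0 E (v i) (g h) w r ?_ (q x) ?_ (δ x) ?_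
        · intro j k
          have h6 := hEuler 1 one_pos i j k h hzact
          rw [one_smul, dotProduct_add, hzact] at h6
          linarith
        · rw [← hQ]; exact hqQ x hx0
        · rw [← hD]; exact hδD x hx0
      have hVx0 : (0:ℝ) < V x := lt_of_lt_of_le one_pos hc1
      have hmemy : (V x)⁻¹ • s x ∈ convexHull ℝ (Set.range v) := by
        rw [← hS, hS']
        intro j
        rw [dotProduct_smul, smul_eq_mul]
        have h7 : g j ⬝ᵥ s x ≤ V x * ξ j := (div_le_iff₀ (hξ j)).1 (hψle j x)
        calc (V x)⁻¹ * (g j ⬝ᵥ s x) ≤ (V x)⁻¹ * (V x * ξ j) :=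
              mul_le_mul_of_nonneg_left h7 (inv_nonneg.2 hVx0.le)
          _ = ξ j := by field_simp
      have hactx : g h ⬝ᵥ s x = V x * ξ h := by
        rw [← hψx]
        exact (div_mul_cancel₀ _ (ne_of_gt (hξ h))).symm
      have hk := key_ineq (g h) (ξ h) (hξ h) (matF F0 F (q x))
        ((matE E0 E (q x)).mulVec (δ x)) hvert hsubv (s x) (V x) hc1 hmemy hactx
      have hgE : |g h ⬝ᵥ (matE E0 E (q x)).mulVec (δ x)| ≤ M :=
        hM x ⟨hx0, hx.2.le⟩ h
      have h8 : g h ⬝ᵥ dv x ≤ (V x - 1) * M := by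
        refine le_trans hk ?_
        exact mul_le_mul_of_nonneg_left hgE (by linarith)
      have h9 : (g h ⬝ᵥ dv x) / ξ h ≤ ((V x - 1) * M) / ξ h :=
        (div_le_div_iff_of_pos_right (hξ h)).2 h8
      have h10 : ((V x - 1) * M) / ξ h ≤ ((V x - 1) * M) / ξmin :=
        div_le_div_of_nonneg_left (mul_nonneg (by linarith) hM0) hξmin (hξminle h)
      have h11 : ((V x - 1) * M) / ξmin = K * V x + (-K) := by
        rw [hKdef]
        field_simp
        ring
      linarith
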